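/- C(L_{∞ω}) = V: if first-order logic is replaced by the infinitary logic L_{∞ω} in the definition of Gödel's constructible hierarchy, the resulting inner model is the whole universe V. (The proof in fact shows C(L^ω_{∞ω}) = V, where only finitely many free variables are allowed per formula.) -/

import Mathlib

noncomputable section

open Classical

/-! # Inner models from extended logics: basic framework

We work in the ambient universe `V` of sets, formalized as Mathlib's `ZFSet.{0}`
(the `pSet`-quotient model of ZFC).  An *abstract logic* `ℒ* = (S*, T*)` is
given by a class of formulas together with a satisfaction relation on
membership structures `(M, ∈)` (with `M : ZFSet.{0}`), where assignments
`ℕ → ZFSet.{0}` interpret the (first-order) variables, and satisfaction is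
evaluated in `V`.  Following Kennedy–Magidor–Väänänen, for a logic `ℒ*` the
hierarchy `L'_α` and the inner model `C(ℒ*) = ⋃_α L'_α` are defined by
`L'_0 = ∅`, `L'_{α+1} = Def_{ℒ*}(L'_α)`, and unions at limits. -/

/-- An abstract logic: a class of formulas together with a satisfaction
relation for structures of the form `(M, ∈)`, `M : ZFSet.{0}`, evaluated in `V`. -/
structure AbstractLogic : Type 2 where
  Formula : Type 1
  Sat : ZFSet.{0} → Formula → (ℕ → ZFSet.{0}) → Prop

namespace AbstractLogic

/-- `Def_{ℒ*}(M)`: the set of all subsets of `M` of the form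
`{a ∈ M : (M, ∈) ⊨ φ(a, b⃗)}`, where `φ(x, y⃗)` is a formula of `ℒ*` and
`b⃗ ∈ M` (variable `0` is the distinguished free variable; the default value
`∅` is also allowed, so that no parameters are required). -/
def defSet (L : AbstractLogic) (M : ZFSet.{0}) : ZFSet.{0} :=
  ZFSet.sep
    (fun X => ∃ (φ : L.Formula) (v : ℕ → ZFSet.{0}), (∀ n, v n ∈ M ∨ v n = ∅) ∧
      ∀ a : ZFSet.{0}, a ∈ X ↔ a ∈ M ∧ L.Sat M φ (fun n => Nat.rec a (fun k _ => v k) n))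
    (ZFSet.powerset M)

/-- The hierarchy `L'_α` of sets constructible using `ℒ*`, built over a
base set (`base = ∅` gives the hierarchy of the paper). -/
def hierFrom (L : AbstractLogic) (base : ZFSet.{0}) (α : Ordinal.{0}) : ZFSet.{0} :=
  Ordinal.limitRecOn α base (fun _ ih => L.defSet ih)
    (fun o _ ih =>
      ZFSet.sUnion (ZFSet.range fun i : o.ToType =>
        ih ((Ordinal.ToType.mk (o := o)).symm i).1 ((Ordinal.ToType.mk (o := o)).symm i).2))

/-- The hierarchy `L'_α` of sets constructible using `ℒ*`. -/
def hier (L : AbstractLogic) : Ordinal.{0} → ZFSet.{0} := L.hierFrom ∅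

/-- The inner model `C(ℒ*) = ⋃_{α ∈ On} L'_α`, as a class. -/
def C (L : AbstractLogic) : Set ZFSet.{0} := {x | ∃ α : Ordinal.{0}, x ∈ L.hier α}

/-- Build an abstract logic from a small type of formulas. -/
def ofSmall (F : Type) (S : ZFSet.{0} → F → (ℕ → ZFSet.{0}) → Prop) : AbstractLogic :=
  ⟨ULift.{1} F, fun M φ v => S M φ.down v⟩

end AbstractLogic

/-! ## First-order logic -/

/-- First-order formulas of the language of set theory (variables are
indexed by `ℕ`). -/
inductive FOFormula : Type
  | eq : ℕ → ℕ → FOFormula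
  | mem : ℕ → ℕ → FOFormula
  | neg : FOFormula → FOFormula
  | and : FOFormula → FOFormula → FOFormula
  | ex : ℕ → FOFormula → FOFormula

/-- Satisfaction for first-order formulas in `(M, ∈)`, `M : ZFSet.{0}`. -/
def FOSat (M : ZFSet.{0}) : FOFormula → (ℕ → ZFSet.{0}) → Prop
  | .eq i j, v => v i = v j
  | .mem i j, v => v i ∈ v j
  | .neg φ, v => ¬ FOSat M φ v
  | .and φ ψ, v => FOSat M φ v ∧ FOSat M ψ v
  | .ex i φ, v => ∃ a, a ∈ M ∧ FOSat M φ (Function.update v i a)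

/-- Satisfaction for first-order formulas in a class structure `(D, ∈)`,
`D : Set ZFSet.{0}`. -/
def SatIn (D : Set ZFSet.{0}) : FOFormula → (ℕ → ZFSet.{0}) → Prop
  | .eq i j, v => v i = v j
  | .mem i j, v => v i ∈ v j
  | .neg φ, v => ¬ SatIn D φ v
  | .and φ ψ, v => SatIn D φ v ∧ SatIn D ψ v
  | .ex i φ, v => ∃ a, a ∈ D ∧ SatIn D φ (Function.update v i a)

/-- First-order logic `ℒ_{ωω}` as an abstract logic. -/
def FO : AbstractLogic := AbstractLogic.ofSmall FOFormula FOSat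

/-- Gödel's constructible universe `L = C(ℒ_{ωω})`. -/
def GodelL : Set ZFSet.{0} := FO.C

/-! ## Von Neumann ordinals and basic set-theoretic machinery -/

/-- The von Neumann ordinal corresponding to `o : Ordinal`. -/
def vN (o : Ordinal.{0}) : ZFSet.{0} :=
  ZFSet.range fun i : o.ToType =>
    vN (((Ordinal.ToType.mk (o := o)).symm i : Set.Iio o) : Ordinal.{0})
termination_by o
decreasing_by exact ((Ordinal.ToType.mk (o := o)).symm i).2

/-- `x` is a (von Neumann) ordinal, i.e. a transitive set of transitive sets. -/
def ZOrd (x : ZFSet.{0}) : Prop := x.IsTransitive ∧ ∀ y ∈ x.toSet, ZFSet.IsTransitive y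

/-- Application of a set-coded function `f` to `x`. -/
def zApp (f x : ZFSet.{0}) : ZFSet.{0} :=
  ZFSet.sUnion (ZFSet.sep (fun y => ZFSet.pair x y ∈ f) (ZFSet.sUnion (ZFSet.sUnion f)))

/-- The von Neumann natural number `n` as a `ZFSet.{0}`. -/
def natToZF : ℕ → ZFSet.{0}
  | 0 => ∅
  | n + 1 => insert (natToZF n) (natToZF n)

/-- Iterated unions (towards the transitive closure). -/
def iterUnion (x : ZFSet.{0}) : ℕ → ZFSet.{0}
  | 0 => x
  | n + 1 => ZFSet.sUnion (iterUnion x n)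

/-- The transitive closure of `x` (the set of members, members of members, …). -/
def tcl (x : ZFSet.{0}) : ZFSet.{0} := ZFSet.sUnion (ZFSet.range fun n : ℕ => iterUnion x n)

/-- A class `D` is transitive. -/
def IsTransClass (D : Set ZFSet.{0}) : Prop := ∀ x ∈ D, ∀ y ∈ x.toSet, y ∈ D

/-- `g` is a surjection of `b` onto `x` (as set-coded functions). -/
def SurjFun (b x g : ZFSet.{0}) : Prop :=
  ZFSet.IsFunc b x g ∧ ∀ c ∈ x.toSet, ∃ a ∈ b.toSet, zApp g a = c

/-- `g` is an injection of `b` into `x` (as set-coded functions). -/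
def InjFun (b x g : ZFSet.{0}) : Prop :=
  ZFSet.IsFunc b x g ∧ ∀ a₁ ∈ b.toSet, ∀ a₂ ∈ b.toSet, zApp g a₁ = zApp g a₂ → a₁ = a₂

/-- `D` is a transitive (set or class) model of ZFC, stated semantically:
transitivity, infinity, pairing, union, (relative) power set, the separation
and replacement schemas for first-order formulas (with parameters), and
choice in the form "every set is the surjective image of an ordinal". -/
def ModelsZFC (D : Set ZFSet.{0}) : Prop :=
  IsTransClass D ∧
  ZFSet.omega ∈ D ∧
  (∀ x ∈ D, ∀ y ∈ D, ({x, y} : ZFSet.{0}) ∈ D) ∧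
  (∀ x ∈ D, ZFSet.sUnion x ∈ D) ∧
  (∀ x ∈ D, ZFSet.sep (· ∈ D) (ZFSet.powerset x) ∈ D) ∧
  (∀ (φ : FOFormula) (v : ℕ → ZFSet.{0}), (∀ n, v n ∈ D) → ∀ x ∈ D,
      ZFSet.sep (fun a => SatIn D φ (fun n => Nat.rec a (fun k _ => v k) n)) x ∈ D) ∧
  (∀ (φ : FOFormula) (v : ℕ → ZFSet.{0}), (∀ n, v n ∈ D) → ∀ x ∈ D,
      (∀ a ∈ x.toSet, ∀ b₁ ∈ D, ∀ b₂ ∈ D,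
        SatIn D φ (fun n => Nat.rec a (fun k _ => Nat.rec b₁ (fun m _ => v m) k) n) →
        SatIn D φ (fun n => Nat.rec a (fun k _ => Nat.rec b₂ (fun m _ => v m) k) n) →
        b₁ = b₂) →
      ∃ y ∈ D, ∀ b : ZFSet.{0}, b ∈ y ↔ b ∈ D ∧ ∃ a ∈ x.toSet,
        SatIn D φ (fun n => Nat.rec a (fun k _ => Nat.rec b (fun m _ => v m) k) n)) ∧
  (∀ x ∈ D, ∃ w ∈ D, ∃ g ∈ D, ZOrd w ∧ SurjFun w x g)

/-! ## Linear orders, cofinality (computed in `V`), the cofinality quantifier -/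

/-- `R` is a strict linear order on the class `A`. -/
def IsLinOrdOn (A : Set ZFSet.{0}) (R : ZFSet.{0} → ZFSet.{0} → Prop) : Prop :=
  (∀ a ∈ A, ¬ R a a) ∧
  (∀ a ∈ A, ∀ b ∈ A, ∀ c ∈ A, R a b → R b c → R a c) ∧
  (∀ a ∈ A, ∀ b ∈ A, a ≠ b → R a b ∨ R b a)

/-- `B` is cofinal in `(A, R)`. -/
def IsCofinalIn (A : Set ZFSet.{0}) (R : ZFSet.{0} → ZFSet.{0} → Prop) (B : Set ZFSet.{0}) : Prop :=
  B ⊆ A ∧ ∀ a ∈ A, ∃ b ∈ B, a = b ∨ R a b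

/-- The cofinality, computed in `V`, of the order `(A, R)`: the least
cardinality of a cofinal subset. -/
def cofinalityOf (A : Set ZFSet.{0}) (R : ZFSet.{0} → ZFSet.{0} → Prop) : Cardinal.{1} :=
  sInf {c : Cardinal.{1} | ∃ B : Set ZFSet.{0}, IsCofinalIn A R B ∧ Cardinal.mk B = c}

/-- Formulas of `ℒ(Q^cf)`: first-order logic with the cofinality
quantifier `Q^cf x y φ(x,y)`. -/
inductive QcfFormula : Type
  | eq : ℕ → ℕ → QcfFormula
  | mem : ℕ → ℕ → QcfFormula
  | neg : QcfFormula → QcfFormula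
  | and : QcfFormula → QcfFormula → QcfFormula
  | ex : ℕ → QcfFormula → QcfFormula
  | qcf : ℕ → ℕ → QcfFormula → QcfFormula

/-- Satisfaction for `ℒ(Q^cf)` in `(M, ∈)`.  The parameter `P` is the
condition imposed on the `V`-cofinality of the defined linear order: with
`P = (· = κ)` we obtain the quantifier `Q^cf_κ`, and with `P = (· < κ)`
the quantifier `Q^cf_{<κ}`. -/
def QcfSat (P : Cardinal.{1} → Prop) (M : ZFSet.{0}) : QcfFormula → (ℕ → ZFSet.{0}) → Prop
  | .eq i j, v => v i = v j
  | .mem i j, v => v i ∈ v j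
  | .neg φ, v => ¬ QcfSat P M φ v
  | .and φ ψ, v => QcfSat P M φ v ∧ QcfSat P M ψ v
  | .ex i φ, v => ∃ a, a ∈ M ∧ QcfSat P M φ (Function.update v i a)
  | .qcf i j φ, v =>
      let R : ZFSet.{0} → ZFSet.{0} → Prop := fun c d =>
        c ∈ M ∧ d ∈ M ∧ QcfSat P M φ (Function.update (Function.update v i c) j d)
      IsLinOrdOn {c | ∃ d, R c d ∨ R d c} R ∧
        P (cofinalityOf {c | ∃ d, R c d ∨ R d c} R)

/-- The logic `ℒ(Q^cf_κ)`, where the cofinality quantifier asserts that the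
defined relation is a linear order of `V`-cofinality exactly `κ`. -/
def QcfLogic (κ : Cardinal.{1}) : AbstractLogic :=
  AbstractLogic.ofSmall QcfFormula (QcfSat (· = κ))

/-- The logic `ℒ(Q^cf_{<κ})`. -/
def QcfLtLogic (κ : Cardinal.{1}) : AbstractLogic :=
  AbstractLogic.ofSmall QcfFormula (QcfSat (· < κ))

/-- The inner model `C*_κ = C(ℒ(Q^cf_κ))`. -/
def CstarAt (κ : Cardinal.{0}) : Set ZFSet.{0} := (QcfLogic (Cardinal.lift.{1} κ)).C

/-- The inner model `C* = C(ℒ(Q^cf_ω))`. -/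
def Cstar : Set ZFSet.{0} := CstarAt Cardinal.aleph0

/-- The inner model `C*_{<κ} = C(ℒ(Q^cf_{<κ}))`. -/
def CstarLt (κ : Cardinal.{0}) : Set ZFSet.{0} := (QcfLtLogic (Cardinal.lift.{1} κ)).C

/-! ## Internal (relativized) set-theoretic notions -/

/-- The power set of `x` as computed in the transitive class `D`. -/
def powersetIn (D : Set ZFSet.{0}) (x : ZFSet.{0}) : ZFSet.{0} :=
  ZFSet.sep (· ∈ D) (ZFSet.powerset x)

/-- `x` is a regular limit ordinal from the point of view of the inner model
`D`: no function of `D` from a smaller ordinal into `x` is cofinal. -/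
def IsRegularIn (D : Set ZFSet.{0}) (x : ZFSet.{0}) : Prop :=
  ZOrd x ∧ (∀ y ∈ x.toSet, ∃ z ∈ x.toSet, y ∈ z) ∧
  ∀ g ∈ D, ∀ b ∈ x.toSet, ZFSet.IsFunc b x g →
    ∃ c ∈ x.toSet, ∀ a ∈ b.toSet, zApp g a ∈ c

/-- `x` is a cardinal from the point of view of the inner model `D`. -/
def IsCardinalIn (D : Set ZFSet.{0}) (x : ZFSet.{0}) : Prop :=
  ZOrd x ∧ ∀ g ∈ D, ∀ b ∈ x.toSet, ¬ SurjFun b x g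

/-- `x` is a strong limit from the point of view of `D`. -/
def StrongLimitIn (D : Set ZFSet.{0}) (x : ZFSet.{0}) : Prop :=
  ∀ b ∈ x.toSet, ∃ c ∈ x.toSet, ∃ g ∈ D, InjFun (powersetIn D b) c g

/-- `x` is strongly inaccessible from the point of view of `D`. -/
def StrongInaccessibleIn (D : Set ZFSet.{0}) (x : ZFSet.{0}) : Prop :=
  ZFSet.omega ∈ x ∧ IsRegularIn D x ∧ StrongLimitIn D x

/-- `c` is club (closed unbounded) in the ordinal `bound`. -/
def IsClubIn (c bound : ZFSet.{0}) : Prop :=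
  (∀ d ∈ c.toSet, d ∈ bound) ∧
  (∀ a ∈ bound.toSet, ∃ d ∈ c.toSet, a ∈ d) ∧
  (∀ b ∈ bound.toSet, b ≠ ∅ →
    (∀ a ∈ b.toSet, ∃ d ∈ c.toSet, d ∈ b ∧ (a ∈ d ∨ a = d)) → b ∈ c)

/-! ## Large cardinals (in `V`) -/

/-- `κ` is a measurable cardinal: there is a `κ`-complete nonprincipal
ultrafilter on `κ`. -/
def IsMeasurableCard (κ : Cardinal.{0}) : Prop :=
  Cardinal.aleph0 < κ ∧
  ∃ U : Ultrafilter κ.ord.ToType,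
    (∀ a : κ.ord.ToType, ({a}ᶜ : Set κ.ord.ToType) ∈ U) ∧
    ∀ (ι : Type) (f : ι → Set κ.ord.ToType), Cardinal.mk ι < κ →
      (∀ i, f i ∈ U) → (⋂ i, f i) ∈ U

/-- `j` is an elementary embedding of `V` into the (transitive) class `M`. -/
def ElementaryInto (M : Set ZFSet.{0}) (j : ZFSet.{0} → ZFSet.{0}) : Prop :=
  (∀ x : ZFSet.{0}, j x ∈ M) ∧
  ∀ (φ : FOFormula) (v : ℕ → ZFSet.{0}),
    SatIn Set.univ φ v ↔ SatIn M φ (fun n => j (v n))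

/-- `j` has critical point `κ`. -/
def CritAt (j : ZFSet.{0} → ZFSet.{0}) (κ : Ordinal.{0}) : Prop :=
  (∀ o < κ, j (vN o) = vN o) ∧ j (vN κ) ≠ vN κ

/-- `lam` is a Woodin cardinal: for every `f : lam → lam` there is `κ < lam`
closed under `f` and an elementary embedding `j : V → M` with critical point
`κ` such that `V_{j(f)(κ)} ⊆ M`. -/
def IsVWoodin (lam : Ordinal.{0}) : Prop :=
  ∀ f : ZFSet.{0}, ZFSet.IsFunc (vN lam) (vN lam) f →
    ∃ κ : Ordinal.{0}, κ < lam ∧ (∀ o < κ, zApp f (vN o) ∈ vN κ) ∧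
      ∃ (M : Set ZFSet.{0}) (j : ZFSet.{0} → ZFSet.{0}),
        IsTransClass M ∧ ElementaryInto M j ∧ CritAt j κ ∧
        ∀ x : ZFSet.{0}, x.rank < (zApp (j f) (vN κ)).rank → x ∈ M


/-! ## The infinitary logic `ℒ_{∞ω}` -/

/-- Formulas of `ℒ_{∞ω}`: set-sized conjunctions (indexed by arbitrary small
types, i.e. by arbitrary sets) together with negation and finite strings of
quantifiers. -/
inductive InfFormula : Type 1
  | eq : ℕ → ℕ → InfFormula
  | mem : ℕ → ℕ → InfFormula
  | neg : InfFormula → InfFormula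
  | conj : (ι : Type) → (ι → InfFormula) → InfFormula
  | ex : ℕ → InfFormula → InfFormula

/-- Satisfaction for `ℒ_{∞ω}` in `(M, ∈)`. -/
def InfSat (M : ZFSet.{0}) : InfFormula → (ℕ → ZFSet.{0}) → Prop
  | .eq i j, v => v i = v j
  | .mem i j, v => v i ∈ v j
  | .neg φ, v => ¬ InfSat M φ v
  | .conj ι f, v => ∀ i : ι, InfSat M (f i) v
  | .ex i φ, v => ∃ a, a ∈ M ∧ InfSat M φ (Function.update v i a)

/-- The logic `ℒ_{∞ω}`. -/
def LinftyOmega : AbstractLogic := ⟨InfFormula, InfSat⟩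

/-! ### Auxiliary material for `stmt_0` -/

namespace Stmt0Aux

open ZFSet

instance smallToSet (a : ZFSet.{0}) : Small.{0} a.toSet := ZFSet.small_coe a

/-- Binary conjunction. -/
def vAnd (φ ψ : InfFormula) : InfFormula := .conj Bool fun b => if b then φ else ψ

/-- Set-sized disjunction. -/
def vOr {ι : Type} (f : ι → InfFormula) : InfFormula := .neg (.conj ι fun i => .neg (f i))

/-- Universal quantifier. -/
def vAll (i : ℕ) (φ : InfFormula) : InfFormula := .neg (.ex i (.neg φ))

/-- Implication. -/
def vImp (φ ψ : InfFormula) : InfFormula := .neg (vAnd φ (.neg ψ))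

lemma sat_vAnd {M : ZFSet.{0}} {φ ψ : InfFormula} {v : ℕ → ZFSet.{0}} :
    InfSat M (vAnd φ ψ) v ↔ InfSat M φ v ∧ InfSat M ψ v := by
  constructor
  · intro h
    exact ⟨by simpa using h true, by simpa using h false⟩
  · rintro ⟨h1, h2⟩ b
    cases b <;> simpa

lemma sat_vOr {M : ZFSet.{0}} {ι : Type} {f : ι → InfFormula} {v : ℕ → ZFSet.{0}} :
    InfSat M (vOr f) v ↔ ∃ i, InfSat M (f i) v := by
  simp [vOr, InfSat, not_forall]

lemma sat_vAll {M : ZFSet.{0}} {i : ℕ} {φ : InfFormula} {v : ℕ → ZFSet.{0}} :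
    InfSat M (vAll i φ) v ↔ ∀ a ∈ M, InfSat M φ (Function.update v i a) := by
  simp [vAll, InfSat, not_exists]

lemma sat_vImp {M : ZFSet.{0}} {φ ψ : InfFormula} {v : ℕ → ZFSet.{0}} :
    InfSat M (vImp φ ψ) v ↔ (InfSat M φ v → InfSat M ψ v) := by
  have : InfSat M (vImp φ ψ) v ↔ ¬ InfSat M (vAnd φ (.neg ψ)) v := Iff.rfl
  rw [this, sat_vAnd]
  show ¬ (_ ∧ ¬ _) ↔ _
  tauto

/-- For each set `a`, a formula `sig a n` with free variable `n` saying
`x_n = a` (using bound variable `n+1`). -/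
noncomputable def sig : ZFSet.{0} → ℕ → InfFormula :=
  WellFounded.fix ZFSet.mem_wf fun a ih n =>
    vAnd
      (vAll (n+1) (vImp (.mem (n+1) n)
        (vOr (ι := Shrink.{0} a.toSet) fun i =>
          ih ((equivShrink a.toSet).symm i).1 ((equivShrink a.toSet).symm i).2 (n+1))))
      (.conj (Shrink.{0} a.toSet) fun i =>
        .ex (n+1) (vAnd (.mem (n+1) n)
          (ih ((equivShrink a.toSet).symm i).1 ((equivShrink a.toSet).symm i).2 (n+1))))

lemma sig_eq (a : ZFSet.{0}) (n : ℕ) :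
    sig a n = vAnd
      (vAll (n+1) (vImp (.mem (n+1) n)
        (vOr (ι := Shrink.{0} a.toSet) fun i =>
          sig ((equivShrink a.toSet).symm i).1 (n+1))))
      (.conj (Shrink.{0} a.toSet) fun i =>
        .ex (n+1) (vAnd (.mem (n+1) n)
          (sig ((equivShrink a.toSet).symm i).1 (n+1)))) := by
  conv_lhs => rw [sig, WellFounded.fix_eq]
  rfl

lemma sig_spec : ∀ a M : ZFSet.{0}, M.IsTransitive → a ∈ M →
    ∀ (n : ℕ) (v : ℕ → ZFSet.{0}), v n ∈ M → (InfSat M (sig a n) v ↔ v n = a) := by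
  intro a
  induction a using ZFSet.inductionOn with
  | _ a IH =>
    intro M hM haM n v hvn
    have hsub : a ⊆ M := hM.subset_of_mem haM
    have hupd0 : ∀ z : ZFSet.{0}, Function.update v (n+1) z n = v n := fun z =>
      Function.update_of_ne (by omega) _ _
    have hupd1 : ∀ z : ZFSet.{0}, Function.update v (n+1) z (n+1) = z := fun z =>
      Function.update_self _ _ _
    rw [sig_eq, sat_vAnd, sat_vAll]
    constructor
    · rintro ⟨h1, h2⟩
      apply ZFSet.ext
      intro z
      constructor
      · intro hz
        have hzM : z ∈ M := hM.mem_trans hz hvn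
        have := (sat_vImp.mp (h1 z hzM)) (by
          show Function.update v (n+1) z (n+1) ∈ Function.update v (n+1) z n
          rw [hupd0, hupd1]; exact hz)
        rw [sat_vOr] at this
        obtain ⟨i, hi⟩ := this
        have hc : ((equivShrink a.toSet).symm i).1 ∈ a := ((equivShrink a.toSet).symm i).2
        have := (IH _ hc M hM (hsub hc) (n+1) (Function.update v (n+1) z) (by rw [hupd1]; exact hzM)).mp hi
        rw [hupd1] at this
        rw [this]; exact hc
      · intro hz
        have h2i := h2 (equivShrink a.toSet ⟨z, hz⟩)
        obtain ⟨y, hyM, hy⟩ := h2i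
        rw [sat_vAnd] at hy
        obtain ⟨hy1, hy2⟩ := hy
        have hc : ((equivShrink a.toSet).symm (equivShrink a.toSet ⟨z, hz⟩)).1 = z := by
          rw [Equiv.symm_apply_apply]
        have := (IH z hz M hM (hsub hz) (n+1) (Function.update v (n+1) y) (by rw [hupd1]; exact hyM)).mp
          (by rw [← hc]; exact hy2)
        rw [hupd1] at this
        subst this
        have : Function.update v (n+1) y (n+1) ∈ Function.update v (n+1) y n := hy1
        rw [hupd0, hupd1] at this
        exact this
    · intro hv
      constructor
      · intro z hzM
        rw [sat_vImp]
        intro hmem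
        have hz : z ∈ a := by
          have : Function.update v (n+1) z (n+1) ∈ Function.update v (n+1) z n := hmem
          rw [hupd0, hupd1, hv] at this; exact this
        rw [sat_vOr]
        refine ⟨equivShrink a.toSet ⟨z, hz⟩, ?_⟩
        have hc : ((equivShrink a.toSet).symm (equivShrink a.toSet ⟨z, hz⟩)).1 = z := by
          rw [Equiv.symm_apply_apply]
        rw [hc]
        exact (IH z hz M hM (hsub hz) (n+1) (Function.update v (n+1) z) (by rw [hupd1]; exact hzM)).mpr (hupd1 z)
      · intro i
        set c := ((equivShrink a.toSet).symm i).1 with hc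
        have hca : c ∈ a := ((equivShrink a.toSet).symm i).2
        refine ⟨c, hsub hca, ?_⟩
        rw [sat_vAnd]
        constructor
        · show Function.update v (n+1) c (n+1) ∈ Function.update v (n+1) c n
          rw [hupd0, hupd1, hv]; exact hca
        · exact (IH c hca M hM (hsub hca) (n+1) (Function.update v (n+1) c) (by rw [hupd1]; exact hsub hca)).mpr
            (hupd1 c)

lemma defSet_eq {M : ZFSet.{0}} (hM : M.IsTransitive) :
    LinftyOmega.defSet M = ZFSet.powerset M := by
  apply ZFSet.ext
  intro X
  simp only [AbstractLogic.defSet, ZFSet.mem_sep]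
  constructor
  · rintro ⟨h, -⟩; exact h
  · intro hX
    have hXsub : X ⊆ M := ZFSet.mem_powerset.mp hX
    refine ⟨hX, vOr (ι := Shrink.{0} X.toSet) fun i => sig ((equivShrink X.toSet).symm i).1 0,
      fun _ => ∅, fun n => Or.inr rfl, ?_⟩
    intro a
    show a ∈ X ↔ a ∈ M ∧ InfSat M _ _
    set v' : ℕ → ZFSet.{0} := fun n => Nat.rec a (fun k _ => (∅ : ZFSet.{0})) n with hv'
    have hv0 : v' 0 = a := rfl
    constructor
    · intro ha
      have haM : a ∈ M := hXsub ha
      refine ⟨haM, ?_⟩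
      rw [sat_vOr]
      refine ⟨equivShrink X.toSet ⟨a, ha⟩, ?_⟩
      have hc : ((equivShrink X.toSet).symm (equivShrink X.toSet ⟨a, ha⟩)).1 = a := by
        rw [Equiv.symm_apply_apply]
      rw [hc]
      exact (sig_spec a M hM haM 0 v' (by rw [hv0]; exact haM)).mpr hv0
    · rintro ⟨haM, hsat⟩
      rw [sat_vOr] at hsat
      obtain ⟨i, hi⟩ := hsat
      have hcX : ((equivShrink X.toSet).symm i).1 ∈ X := ((equivShrink X.toSet).symm i).2
      have := (sig_spec _ M hM (hXsub hcX) 0 v' (by rw [hv0]; exact haM)).mp hi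
      rw [hv0] at this
      rw [this]; exact hcX

lemma hier_zero : LinftyOmega.hier 0 = ∅ := by
  rw [AbstractLogic.hier, AbstractLogic.hierFrom, Ordinal.limitRecOn_zero]

lemma hier_succ (α : Ordinal.{0}) :
    LinftyOmega.hier (Order.succ α) = LinftyOmega.defSet (LinftyOmega.hier α) := by
  rw [AbstractLogic.hier, AbstractLogic.hierFrom, Ordinal.limitRecOn_succ]
  rfl

lemma hier_limit (o : Ordinal.{0}) (h : Order.IsSuccLimit o) :
    LinftyOmega.hier o = ZFSet.sUnion (ZFSet.range fun i : o.ToType =>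
      LinftyOmega.hier (((Ordinal.ToType.mk (o := o)).symm i : Set.Iio o) : Ordinal.{0})) := by
  rw [AbstractLogic.hier, AbstractLogic.hierFrom, Ordinal.limitRecOn_limit _ _ _ _ h]
  rfl

lemma hier_trans_mono : ∀ α : Ordinal.{0},
    (LinftyOmega.hier α).IsTransitive ∧
    ∀ β ≤ α, LinftyOmega.hier β ⊆ LinftyOmega.hier α := by
  intro α
  induction α using Ordinal.limitRecOn with
  | zero =>
    refine ⟨by rw [hier_zero]; exact ZFSet.isTransitive_empty, ?_⟩
    intro β hβ
    rw [nonpos_iff_eq_zero.mp hβ]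
  | add_one α IH =>
    rw [Ordinal.add_one_eq_succ]
    rw [hier_succ, defSet_eq IH.1]
    refine ⟨IH.1.powerset, ?_⟩
    intro β hβ
    rcases (Order.le_succ_iff_eq_or_le.mp hβ) with h | h
    · rw [h, hier_succ, defSet_eq IH.1]
    · exact fun x hx => ZFSet.mem_powerset.mpr
        (IH.1.subset_of_mem (IH.2 β h hx))
  | limit o ho IH =>
    have hmem : ∀ β < o, ∀ x, x ∈ LinftyOmega.hier β → x ∈ LinftyOmega.hier o := by
      intro β hβ x hx
      rw [hier_limit o ho]
      rw [ZFSet.mem_sUnion]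
      refine ⟨LinftyOmega.hier (((Ordinal.ToType.mk (o := o)).symm
        (Ordinal.ToType.mk (o := o) ⟨β, hβ⟩) : Set.Iio o) : Ordinal.{0}), ?_, ?_⟩
      · exact ZFSet.mem_range.mpr ⟨Ordinal.ToType.mk (o := o) ⟨β, hβ⟩, rfl⟩
      · rw [OrderIso.symm_apply_apply]; exact hx
    constructor
    · intro y hy
      rw [hier_limit o ho, ZFSet.mem_sUnion] at hy
      obtain ⟨t, ht, hyt⟩ := hy
      obtain ⟨i, hi⟩ := ZFSet.mem_range.mp ht
      set β : Ordinal.{0} := (((Ordinal.ToType.mk (o := o)).symm i : Set.Iio o) : Ordinal.{0})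
      have hβ : β < o := ((Ordinal.ToType.mk (o := o)).symm i).2
      rw [← hi] at hyt
      intro z hz
      exact hmem β hβ z ((IH β hβ).1.subset_of_mem hyt hz)
    · intro β hβ
      rcases lt_or_eq_of_le hβ with h | h
      · exact fun x hx => hmem β h x hx
      · rw [h]

lemma mem_hier_of_forall (x : ZFSet.{0}) : ∃ α : Ordinal.{0}, x ∈ LinftyOmega.hier α := by
  induction x using ZFSet.inductionOn with
  | _ x IH =>
    have hch : ∀ i : Shrink.{0} x.toSet, ∃ α : Ordinal.{0},
        (((equivShrink x.toSet).symm i).1 : ZFSet.{0}) ∈ LinftyOmega.hier α :=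
      fun i => IH _ ((equivShrink x.toSet).symm i).2
    choose f hf using hch
    set β : Ordinal.{0} := iSup f
    have hsub : x ⊆ LinftyOmega.hier β := by
      intro y hy
      have := hf (equivShrink x.toSet ⟨y, hy⟩)
      rw [Equiv.symm_apply_apply] at this
      exact (hier_trans_mono β).2 _ (Ordinal.le_iSup f _) this
    refine ⟨Order.succ β, ?_⟩
    rw [hier_succ, defSet_eq (hier_trans_mono β).1]
    exact ZFSet.mem_powerset.mpr hsub

end Stmt0Aux

/-- `C(ℒ_{∞ω}) = V`: replacing first-order logic by the
infinitary logic `ℒ_{∞ω}` in the definition of Gödel's constructible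
hierarchy yields the whole universe `V` of sets. -/
theorem stmt_0 : LinftyOmega.C = Set.univ := by
  apply Set.eq_univ_of_forall
  intro x
  exact Stmt0Aux.mem_hier_of_forall x

end
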